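/- Let Σ be an r×r real matrix, I, J, K pairwise disjoint subsets of {1,...,r} with |I| = |J| = m and |K| ≤ m - 1. If Σ_{(I∪K)×(J∪K)} = M · Σ_{K×K}^{-1} · N where M is the (I∪K)×K block [Σ_{I×K}; Σ_{K×K}] and N is the K×(K∪J) block [Σ_{K×K}, Σ_{K×J}] (with Σ_{K×K} invertible), then det(Σ_{I×J}) = 0. -/

import Mathlib

open Matrix Finset

theorem det_IJ_eq_zero_of_factors_through_K {r m : ℕ}
    (S : Matrix (Fin r) (Fin r) ℝ)
    (I J K : Finset (Fin r))
    (hIJ : Disjoint I J) (hIK : Disjoint I K) (hJK : Disjoint J K)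
    (hI : I.card = m) (hJ : J.card = m)
    (hK : (K.card : ℤ) ≤ (m : ℤ) - 1)
    (hKinv : IsUnit (S.submatrix (Subtype.val : ↥K → Fin r) (Subtype.val : ↥K → Fin r)))
    (hfact : S.submatrix (Subtype.val : ↥(I ∪ K) → Fin r) (Subtype.val : ↥(J ∪ K) → Fin r)
      = S.submatrix (Subtype.val : ↥(I ∪ K) → Fin r) (Subtype.val : ↥K → Fin r)
        * (S.submatrix (Subtype.val : ↥K → Fin r) (Subtype.val : ↥K → Fin r))⁻¹
        * S.submatrix (Subtype.val : ↥K → Fin r) (Subtype.val : ↥(J ∪ K) → Fin r)) :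
    (S.submatrix (I.orderEmbOfFin hI) (J.orderEmbOfFin hJ)).det = 0 := by
  have hKm : K.card < m := by omega
  set T := S.submatrix (I.orderEmbOfFin hI) (J.orderEmbOfFin hJ) with hT
  -- embeddings of Fin m into the unions
  have hImem : ∀ i : Fin m, (I.orderEmbOfFin hI i : Fin r) ∈ I ∪ K := fun i =>
    Finset.mem_union_left _ (Finset.orderEmbOfFin_mem I hI i)
  have hJmem : ∀ j : Fin m, (J.orderEmbOfFin hJ j : Fin r) ∈ J ∪ K := fun j =>
    Finset.mem_union_left _ (Finset.orderEmbOfFin_mem J hJ j)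
  set f : Fin m → ↥(I ∪ K) := fun i => ⟨I.orderEmbOfFin hI i, hImem i⟩ with hf
  set g : Fin m → ↥(J ∪ K) := fun j => ⟨J.orderEmbOfFin hJ j, hJmem j⟩ with hg
  set A : Matrix (Fin m) ↥K ℝ :=
    ((S.submatrix (Subtype.val : ↥(I ∪ K) → Fin r) (Subtype.val : ↥K → Fin r))
      * (S.submatrix (Subtype.val : ↥K → Fin r) (Subtype.val : ↥K → Fin r))⁻¹).submatrix f id
    with hA
  set B : Matrix ↥K (Fin m) ℝ :=
    (S.submatrix (Subtype.val : ↥K → Fin r) (Subtype.val : ↥(J ∪ K) → Fin r)).submatrix id g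
    with hB
  have hTAB : T = A * B := by
    ext i j
    have := congrFun (congrFun hfact (f i)) (g j)
    simp only [Matrix.mul_apply, Matrix.submatrix_apply, id] at this ⊢
    simpa [hT, hA, hB, hf, hg, Matrix.mul_apply] using this
  by_contra hdet
  have hU : IsUnit T := (Matrix.isUnit_iff_isUnit_det T).mpr (isUnit_iff_ne_zero.mpr hdet)
  have hrank : T.rank = m := by
    simpa using Matrix.rank_of_isUnit T hU
  have hle : T.rank ≤ K.card := by
    rw [hTAB]
    calc (A * B).rank ≤ B.rank := Matrix.rank_mul_le_right A B
      _ ≤ Fintype.card ↥K := Matrix.rank_le_card_height B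
      _ = K.card := Fintype.card_coe K
  omega
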